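/- Let β ≥ 0, let z : ℝ → ℝ be a positive C² function and let w : ℝ → ℝ be a C² function that attains its global maximum at a point x₀ ∈ ℝ. Then z(x₀)·(z^β w)''(x₀) − (β/(β+1))·w(x₀)·(z^{β+1})''(x₀) ≤ −β·z(x₀)^{β−1}·z'(x₀)²·w(x₀). -/

import Mathlib

open Topology Filter Set

lemma aux_deriv2_nonpos_of_max (w : ℝ → ℝ) (hw : ContDiff ℝ 2 w)
    (x₀ : ℝ) (hmax : ∀ x, w x ≤ w x₀) : deriv (deriv w) x₀ ≤ 0 := by
  by_contra h
  push_neg at h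
  have hw2 : ContDiff ℝ 1 (deriv w) := by
    have h2 : ContDiff ℝ ((1 : ℕ) + 1) w := by exact_mod_cast hw
    exact (contDiff_succ_iff_deriv.mp h2).2.2
  have hw'd : Differentiable ℝ (deriv w) := hw2.differentiable one_ne_zero
  have hlm : IsLocalMax w x₀ := Filter.Eventually.of_forall hmax
  have hd0 : deriv w x₀ = 0 := hlm.deriv_eq_zero
  have H : HasDerivAt (deriv w) (deriv (deriv w) x₀) x₀ := (hw'd x₀).hasDerivAt
  have hs : ∀ᶠ y in 𝓝[≠] x₀, 0 < slope (deriv w) x₀ y :=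
    (hasDerivAt_iff_tendsto_slope.mp H).eventually (eventually_gt_nhds h)
  have hs' : ∀ᶠ y in 𝓝[>] x₀, 0 < slope (deriv w) x₀ y :=
    hs.filter_mono (nhdsWithin_mono x₀ (fun y hy => ne_of_gt hy))
  rcases mem_nhdsGT_iff_exists_Ioo_subset.mp hs' with ⟨u, hu, hsub⟩
  have hpos : ∀ y ∈ Set.Ioo x₀ u, 0 < deriv w y := by
    intro y hy
    have h1 : 0 < slope (deriv w) x₀ y := hsub hy
    rw [slope_def_field, hd0, sub_zero] at h1
    have h2 : 0 < y - x₀ := sub_pos.2 hy.1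
    have h3 := mul_pos h1 h2
    rwa [div_mul_cancel₀ _ h2.ne'] at h3
  set m := (x₀ + u) / 2 with hm
  have hxu : x₀ < u := hu
  have hxm : x₀ < m := by rw [hm]; linarith
  have hmu : m < u := by rw [hm]; linarith
  have hmono : StrictMonoOn w (Set.Icc x₀ m) := by
    apply strictMonoOn_of_deriv_pos (convex_Icc x₀ m) hw.continuous.continuousOn
    intro y hy
    rw [interior_Icc] at hy
    exact hpos y ⟨hy.1, lt_trans hy.2 hmu⟩
  have : w x₀ < w m :=
    hmono (Set.left_mem_Icc.2 hxm.le) (Set.right_mem_Icc.2 hxm.le) hxm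
  exact absurd (hmax m) (not_le.2 this)

theorem stmt2
    (β : ℝ) (hβ : 0 ≤ β)
    (z w : ℝ → ℝ) (hz : ContDiff ℝ 2 z) (hzpos : ∀ x, 0 < z x)
    (hw : ContDiff ℝ 2 w)
    (x₀ : ℝ) (hmax : ∀ x, w x ≤ w x₀) :
    z x₀ * deriv (deriv (fun x => z x ^ β * w x)) x₀
        - (β / (β + 1)) * w x₀ * deriv (deriv (fun x => z x ^ (β + 1))) x₀
      ≤ -(β * z x₀ ^ (β - 1) * (deriv z x₀) ^ 2 * w x₀) := by
  have hzd : Differentiable ℝ z := hz.differentiable two_ne_zero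
  have hwd : Differentiable ℝ w := hw.differentiable two_ne_zero
  have hz2 : ContDiff ℝ 1 (deriv z) := by
    have h2 : ContDiff ℝ ((1 : ℕ) + 1) z := by exact_mod_cast hz
    exact (contDiff_succ_iff_deriv.mp h2).2.2
  have hw2 : ContDiff ℝ 1 (deriv w) := by
    have h2 : ContDiff ℝ ((1 : ℕ) + 1) w := by exact_mod_cast hw
    exact (contDiff_succ_iff_deriv.mp h2).2.2
  have hz'd : Differentiable ℝ (deriv z) := hz2.differentiable one_ne_zero
  have hw'd : Differentiable ℝ (deriv w) := hw2.differentiable one_ne_zero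
  have hZ : ∀ x, HasDerivAt z (deriv z x) x := fun x => (hzd x).hasDerivAt
  have hZ' : ∀ x, HasDerivAt (deriv z) (deriv (deriv z) x) x := fun x => (hz'd x).hasDerivAt
  have hW : ∀ x, HasDerivAt w (deriv w x) x := fun x => (hwd x).hasDerivAt
  have hW' : ∀ x, HasDerivAt (deriv w) (deriv (deriv w) x) x := fun x => (hw'd x).hasDerivAt
  have hlm : IsLocalMax w x₀ := Filter.Eventually.of_forall hmax
  have hd0 : deriv w x₀ = 0 := hlm.deriv_eq_zero
  have hW2 : deriv (deriv w) x₀ ≤ 0 := aux_deriv2_nonpos_of_max w hw x₀ hmax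
  -- first derivatives (as functions)
  have hgd : deriv (fun x => z x ^ β * w x)
      = fun x => deriv z x * β * z x ^ (β - 1) * w x + z x ^ β * deriv w x :=
    funext fun x => (((hZ x).rpow_const (Or.inl (hzpos x).ne')).mul (hW x)).deriv
  have hg2d : deriv (fun x => z x ^ (β + 1))
      = fun x => deriv z x * (β + 1) * z x ^ (β + 1 - 1) :=
    funext fun x => ((hZ x).rpow_const (p := β + 1) (Or.inl (hzpos x).ne')).deriv
  -- second derivatives at x₀
  have hD := ((((hZ' x₀).mul_const β).mul
        ((hZ x₀).rpow_const (p := β - 1) (Or.inl (hzpos x₀).ne'))).mul (hW x₀)).add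
      (((hZ x₀).rpow_const (p := β) (Or.inl (hzpos x₀).ne')).mul (hW' x₀))
  have hD2 := (((hZ' x₀).mul_const (β + 1)).mul
      ((hZ x₀).rpow_const (p := β + 1 - 1) (Or.inl (hzpos x₀).ne')))
  have e1 : deriv (fun x => deriv z x * β * z x ^ (β - 1) * w x + z x ^ β * deriv w x) x₀
      = (deriv (deriv z) x₀ * β * z x₀ ^ (β - 1) + deriv z x₀ * β * (deriv z x₀ * (β - 1) * z x₀ ^ (β - 1 - 1))) * w x₀
        + deriv z x₀ * β * z x₀ ^ (β - 1) * deriv w x₀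
        + (deriv z x₀ * β * z x₀ ^ (β - 1) * deriv w x₀ + z x₀ ^ β * deriv (deriv w) x₀) := hD.deriv
  have e2 : deriv (fun x => deriv z x * (β + 1) * z x ^ (β + 1 - 1)) x₀
      = deriv (deriv z) x₀ * (β + 1) * z x₀ ^ (β + 1 - 1)
        + deriv z x₀ * (β + 1) * (deriv z x₀ * (β + 1 - 1) * z x₀ ^ (β + 1 - 1 - 1)) := hD2.deriv
  rw [hgd, hg2d, e1, e2, hd0]
  have ha : (0 : ℝ) < z x₀ := hzpos x₀
  have hβ1 : (0 : ℝ) < β + 1 := by linarith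
  have hA1 : z x₀ ^ (β - 1) = z x₀ ^ (β - 1 - 1) * z x₀ := by
    rw [← Real.rpow_add_one ha.ne']; congr 1; ring
  have hA2 : z x₀ ^ β = z x₀ ^ (β - 1) * z x₀ := by
    rw [← Real.rpow_add_one ha.ne']; congr 1; ring
  have hA3 : z x₀ ^ (β + 1) = z x₀ ^ β * z x₀ := Real.rpow_add_one ha.ne' β
  have hA4 : β + 1 - 1 = β := by ring
  rw [hA4]
  have key : z x₀ ^ (β + 1) * deriv (deriv w) x₀ ≤ 0 :=
    mul_nonpos_of_nonneg_of_nonpos (Real.rpow_pos_of_pos ha _).le hW2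
  have heq : z x₀ * ((deriv (deriv z) x₀ * β * z x₀ ^ (β - 1)
          + deriv z x₀ * β * (deriv z x₀ * (β - 1) * z x₀ ^ (β - 1 - 1))) * w x₀
        + deriv z x₀ * β * z x₀ ^ (β - 1) * 0
        + (deriv z x₀ * β * z x₀ ^ (β - 1) * 0 + z x₀ ^ β * deriv (deriv w) x₀))
      - β / (β + 1) * w x₀ * (deriv (deriv z) x₀ * (β + 1) * z x₀ ^ β
          + deriv z x₀ * (β + 1) * (deriv z x₀ * β * z x₀ ^ (β - 1)))
      = -(β * z x₀ ^ (β - 1) * (deriv z x₀) ^ 2 * w x₀)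
        + z x₀ ^ (β + 1) * deriv (deriv w) x₀ := by
    rw [hA3, hA2, hA1]
    field_simp
    ring
  rw [heq]  -- may need adjusting
  linarith [key]
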